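/- Let A be a countable ℚ-vector space of bounded Lipschitz functions on a metric space, let A' denote the set of ℚ-linear functionals L : A → ℝ with |L(a)| ≤ C·Lip(a) for some C < ∞ (with ‖L‖ the least such C), endowed with the topology of pointwise convergence on A. Let ν be a Borel probability measure on A' concentrated on {‖L‖ = c} for some c ≥ 0 such that, for every a ∈ A, ν is supported in one of the two halfspaces {L : L(a) ≥ 0} or {L : L(a) ≤ 0}. Then ν is a Dirac mass. -/

import Mathlib

open Set Filter
open scoped NNReal Topology

variable {X : Type*} [MetricSpace X]

/-- `ℚ`-linearity of a functional on a `ℚ`-submodule of functions. -/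
def IsQLinearFunc (A : Submodule ℚ (X → ℝ)) (L : A → ℝ) : Prop :=
  (∀ a b : A, L (a + b) = L a + L b) ∧ ∀ (q : ℚ) (a : A), L (q • a) = q * L a

/-- The (global) Lipschitz constant of a function, as a real number. -/
noncomputable def lipConst (f : X → ℝ) : ℝ :=
  sInf {K : ℝ | 0 ≤ K ∧ LipschitzWith (Real.toNNReal K) f}

/-- The space `A'` of `ℚ`-linear functionals `L : A → ℝ` with `|L(a)| ≤ C·Lip(a)`,
topologized by pointwise convergence on `A`. -/
def Aprime (A : Submodule ℚ (X → ℝ)) : Type _ :=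
  {L : A → ℝ // IsQLinearFunc A L ∧
    ∃ C : ℝ, 0 ≤ C ∧ ∀ a : A, |L a| ≤ C * lipConst (a : X → ℝ)}

instance (A : Submodule ℚ (X → ℝ)) : TopologicalSpace (Aprime A) :=
  instTopologicalSpaceSubtype

noncomputable instance (A : Submodule ℚ (X → ℝ)) : MeasurableSpace (Aprime A) :=
  borel (Aprime A)

/-- `‖L‖`: the least constant `C` with `|L(a)| ≤ C Lip(a)` for all `a ∈ A`. -/
noncomputable def AprimeNorm {A : Submodule ℚ (X → ℝ)} (L : Aprime A) : ℝ :=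
  sInf {C : ℝ | 0 ≤ C ∧ ∀ a : A, |L.1 a| ≤ C * lipConst (a : X → ℝ)}

section Aux

variable {A : Submodule ℚ (X → ℝ)}

lemma lipConst_nonneg (f : X → ℝ) : 0 ≤ lipConst f :=
  Real.sInf_nonneg fun _ hK => hK.1

lemma aprimeNorm_nonneg (L : Aprime A) : 0 ≤ AprimeNorm L :=
  Real.sInf_nonneg fun _ hK => hK.1

lemma aprimeNorm_le (L : Aprime A) {C : ℝ} (hC : 0 ≤ C)
    (h : ∀ a : A, |L.1 a| ≤ C * lipConst (a : X → ℝ)) : AprimeNorm L ≤ C :=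
  csInf_le ⟨0, fun _ hx => hx.1⟩ ⟨hC, h⟩

lemma aprimeNorm_spec (L : Aprime A) (a : A) :
    |L.1 a| ≤ AprimeNorm L * lipConst (a : X → ℝ) := by
  have hlipnn := lipConst_nonneg (a : X → ℝ)
  refine le_of_forall_pos_le_add fun ε hε => ?_
  obtain ⟨C0, hC0⟩ := L.2.2
  have hne : {C : ℝ | 0 ≤ C ∧ ∀ a : A, |L.1 a| ≤ C * lipConst (a : X → ℝ)}.Nonempty :=
    ⟨C0, hC0⟩
  have hε' : 0 < ε / (lipConst (a : X → ℝ) + 1) := by positivity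
  obtain ⟨C, hCmem, hClt⟩ := Real.lt_sInf_add_pos hne hε'
  have h1 : |L.1 a| ≤ C * lipConst (a : X → ℝ) := hCmem.2 a
  have h2 : C < AprimeNorm L + ε / (lipConst (a : X → ℝ) + 1) := hClt
  have h3 : (ε / (lipConst (a : X → ℝ) + 1)) * lipConst (a : X → ℝ) ≤ ε := by
    rw [div_mul_eq_mul_div, div_le_iff₀ (by linarith)]
    nlinarith
  nlinarith

/-- Linearity of the underlying function, combined form. -/
lemma aprime_apply_smul_add (L : Aprime A) (q : ℚ) (a b : A) :
    L.1 (q • a + b) = (q : ℝ) * L.1 a + L.1 b := by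
  rw [L.2.1.1, L.2.1.2]

/-- Two functionals with equal norms, whose values have pointwise nonnegative
products, coincide. -/
lemma aprime_eq_of_sign (L L' : Aprime A)
    (hsign : ∀ a : A, 0 ≤ L.1 a * L'.1 a)
    (hnorm : AprimeNorm L = AprimeNorm L') : L = L' := by
  -- Step 1: proportionality of cross products
  have key : ∀ a b : A, L.1 a * L'.1 b = L.1 b * L'.1 a := by
    intro a b
    have hq : ∀ t : ℝ, 0 ≤ (L.1 a * L'.1 a) * (t * t) + (L.1 a * L'.1 b + L.1 b * L'.1 a) * t
        + L.1 b * L'.1 b := by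
      have hrat : ∀ q : ℚ, 0 ≤ (L.1 a * L'.1 a) * ((q : ℝ) * (q : ℝ))
          + (L.1 a * L'.1 b + L.1 b * L'.1 a) * (q : ℝ) + L.1 b * L'.1 b := by
        intro q
        have h0 := hsign (q • a + b)
        rw [show L.1 (q • a + b) = (q : ℝ) * L.1 a + L.1 b from
            aprime_apply_smul_add L q a b,
          show L'.1 (q • a + b) = (q : ℝ) * L'.1 a + L'.1 b from
            aprime_apply_smul_add L' q a b] at h0
        nlinarith [h0]
      intro t
      have hcl : IsClosed {t : ℝ | 0 ≤ (L.1 a * L'.1 a) * (t * t)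
          + (L.1 a * L'.1 b + L.1 b * L'.1 a) * t + L.1 b * L'.1 b} :=
        isClosed_le continuous_const (by fun_prop)
      have hsub : Set.range ((↑) : ℚ → ℝ) ⊆ {t : ℝ | 0 ≤ (L.1 a * L'.1 a) * (t * t)
          + (L.1 a * L'.1 b + L.1 b * L'.1 a) * t + L.1 b * L'.1 b} := by
        rintro _ ⟨q, rfl⟩; exact hrat q
      have hmem : t ∈ closure (Set.range ((↑) : ℚ → ℝ)) := by
        rw [Rat.denseRange_cast.closure_eq]; trivial
      exact hcl.closure_subset_iff.2 hsub hmem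
    have hd := discrim_le_zero hq
    rw [discrim] at hd
    nlinarith [hd, sq_nonneg (L.1 a * L'.1 b - L.1 b * L'.1 a)]
  by_cases hg0 : ∀ b : A, L'.1 b = 0
  · -- g = 0 forces the common norm to be 0, hence f = 0 as well
    have hnorm' : AprimeNorm L' ≤ 0 :=
      aprimeNorm_le L' le_rfl fun a => by
        rw [show L'.1 a = 0 from hg0 a]; simp [lipConst_nonneg]
    have h0 : AprimeNorm L = 0 :=
      le_antisymm (hnorm ▸ hnorm') (aprimeNorm_nonneg L)
    have hf0 : ∀ a : A, L.1 a = 0 := by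
      intro a
      have := aprimeNorm_spec L a
      rw [h0, zero_mul] at this
      exact abs_eq_zero.1 (le_antisymm this (abs_nonneg _))
    exact Subtype.ext (funext fun a => by rw [hf0 a, hg0 a])
  · push_neg at hg0
    obtain ⟨b, hb⟩ := hg0
    set lam := L.1 b / L'.1 b with hlam
    have hprop : ∀ a : A, L.1 a = lam * L'.1 a := by
      intro a
      have := key a b
      rw [hlam, div_mul_eq_mul_div, eq_div_iff hb]
      linarith [this]
    have hlamnn : 0 ≤ lam := by
      have h1 : lam = (L.1 b * L'.1 b) / (L'.1 b * L'.1 b) := by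
        rw [hlam, mul_div_mul_right _ _ hb]
      rw [h1]
      exact div_nonneg (hsign b) (mul_self_nonneg _)
    by_cases hm : AprimeNorm L = 0
    · -- both norms zero, so L'.1 b = 0, contradiction
      have := aprimeNorm_spec L' b
      rw [← hnorm, hm, zero_mul] at this
      exact absurd (abs_eq_zero.1 (le_antisymm this (abs_nonneg _))) hb
    · have hmpos : 0 < AprimeNorm L := lt_of_le_of_ne (aprimeNorm_nonneg L) (Ne.symm hm)
      have hlampos : 0 < lam := by
        rcases lt_or_eq_of_le hlamnn with h | h
        · exact h
        · exfalso
          have hf0 : ∀ a : A, L.1 a = 0 := fun a => by rw [hprop a, ← h, zero_mul]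
          have : AprimeNorm L ≤ 0 :=
            aprimeNorm_le L le_rfl fun a => by
              rw [hf0 a]; simp [lipConst_nonneg]
          linarith
      -- 1 ≤ lam
      have h1le : 1 ≤ lam := by
        have : AprimeNorm L ≤ lam * AprimeNorm L := by
          apply aprimeNorm_le L (by positivity)
          intro a
          have := aprimeNorm_spec L' a
          rw [← hnorm] at this
          rw [hprop a, abs_mul, abs_of_nonneg hlamnn]
          calc lam * |L'.1 a| ≤ lam * (AprimeNorm L * lipConst (a : X → ℝ)) := by
                exact mul_le_mul_of_nonneg_left this hlamnn
            _ = lam * AprimeNorm L * lipConst (a : X → ℝ) := by ring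
        nlinarith
      have hmpos' : 0 < AprimeNorm L' := hnorm ▸ hmpos
      have hle1 : lam ≤ 1 := by
        have : AprimeNorm L' ≤ (1 / lam) * AprimeNorm L' := by
          apply aprimeNorm_le L' (by positivity)
          intro a
          have hga : L'.1 a = (1 / lam) * L.1 a := by
            rw [hprop a]; field_simp
          have hfa := aprimeNorm_spec L a
          rw [hnorm] at hfa
          rw [hga, abs_mul, abs_of_nonneg (by positivity : (0:ℝ) ≤ 1 / lam)]
          calc (1 / lam) * |L.1 a| ≤ (1 / lam) * (AprimeNorm L' * lipConst (a : X → ℝ)) := by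
                exact mul_le_mul_of_nonneg_left hfa (by positivity)
            _ = (1 / lam) * AprimeNorm L' * lipConst (a : X → ℝ) := by ring
        rw [div_mul_eq_mul_div, one_mul, le_div_iff₀ hlampos] at this
        nlinarith
      have hlam1 : lam = 1 := le_antisymm hle1 h1le
      exact Subtype.ext (funext fun a => by
        rw [hprop a, hlam1, one_mul])

end Aux

/-- A probability measure on `A'` concentrated on `{‖L‖ = c}` and supported, for each
`a ∈ A`, in one of the halfspaces `{L(a) ≥ 0}`, `{L(a) ≤ 0}`, is a Dirac mass. -/
theorem stmt7 (A : Submodule ℚ (X → ℝ)) (hcount : Countable A)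
    (hlip : ∀ a : A, ∃ K : ℝ≥0, LipschitzWith K (a : X → ℝ))
    (hbdd : ∀ a : A, ∃ C : ℝ, ∀ x, |(a : X → ℝ) x| ≤ C)
    (ν : MeasureTheory.Measure (Aprime A)) [MeasureTheory.IsProbabilityMeasure ν]
    (c : ℝ) (hc : 0 ≤ c)
    (hconc : ν {L : Aprime A | AprimeNorm L ≠ c} = 0)
    (hhalf : ∀ a : A, ν {L : Aprime A | L.1 a < 0} = 0 ∨ ν {L : Aprime A | 0 < L.1 a} = 0) :
    ∃ L₀ : Aprime A, ν = MeasureTheory.Measure.dirac L₀ := by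
  classical
  -- for each `a`, pick the null halfspace
  set bad : A → Set (Aprime A) := fun a =>
    if ν {L : Aprime A | L.1 a < 0} = 0 then {L : Aprime A | L.1 a < 0}
    else {L : Aprime A | 0 < L.1 a} with hbad
  have hbadnull : ∀ a : A, ν (bad a) = 0 := by
    intro a
    rw [hbad]
    by_cases h : ν {L : Aprime A | L.1 a < 0} = 0
    · simpa [h] using h
    · have := (hhalf a).resolve_left h
      simpa [h] using this
  have hbadsign : ∀ (a : A) (L L' : Aprime A), L ∉ bad a → L' ∉ bad a →
      0 ≤ L.1 a * L'.1 a := by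
    intro a L L' hL hL'
    rw [hbad] at hL hL'
    by_cases h : ν {L : Aprime A | L.1 a < 0} = 0
    · simp only [if_pos h, Set.mem_setOf_eq, not_lt] at hL hL'
      exact mul_nonneg hL hL'
    · simp only [if_neg h, Set.mem_setOf_eq, not_lt] at hL hL'
      nlinarith [hL, hL']
  -- the bad set
  set N : Set (Aprime A) := {L : Aprime A | AprimeNorm L ≠ c} ∪ ⋃ a : A, bad a with hN
  have hNnull : ν N = 0 := by
    rw [hN]
    refine MeasureTheory.measure_union_null hconc ?_
    exact MeasureTheory.measure_iUnion_null hbadnull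
  -- N is not everything
  have hNne : N ≠ Set.univ := by
    intro h
    have h1 : ν N = 1 := by rw [h]; exact MeasureTheory.measure_univ
    rw [hNnull] at h1
    exact zero_ne_one h1
  obtain ⟨L₀, hL₀⟩ : ∃ L₀ : Aprime A, L₀ ∉ N := by
    by_contra h
    push_neg at h
    exact hNne (Set.eq_univ_of_forall h)
  -- everything outside N equals L₀
  have huniq : ∀ L : Aprime A, L ∉ N → L = L₀ := by
    intro L hL
    have hLn : AprimeNorm L = c := by
      by_contra h
      exact hL (Set.mem_union_left _ h)
    have hL₀n : AprimeNorm L₀ = c := by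
      by_contra h
      exact hL₀ (Set.mem_union_left _ h)
    refine aprime_eq_of_sign L L₀ ?_ (by rw [hLn, hL₀n])
    intro a
    have h1 : L ∉ bad a := fun hmem =>
      hL (Set.mem_union_right _ (Set.mem_iUnion.2 ⟨a, hmem⟩))
    have h2 : L₀ ∉ bad a := fun hmem =>
      hL₀ (Set.mem_union_right _ (Set.mem_iUnion.2 ⟨a, hmem⟩))
    exact hbadsign a L L₀ h1 h2
  have hcompl : ν {L₀}ᶜ = 0 := by
    refine MeasureTheory.measure_mono_null ?_ hNnull
    intro L hLmem
    by_contra h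
    exact hLmem (huniq L h)
  refine ⟨L₀, ?_⟩
  ext s hs
  rw [MeasureTheory.Measure.dirac_apply' _ hs]
  by_cases hL : L₀ ∈ s
  · have hsc : ν sᶜ = 0 := by
      refine MeasureTheory.measure_mono_null ?_ hcompl
      intro L hLs hLeq
      rw [Set.mem_singleton_iff] at hLeq
      exact hLs (hLeq ▸ hL)
    have : ν s = 1 := (MeasureTheory.prob_compl_eq_zero_iff hs).1 hsc
    rw [this, Set.indicator_of_mem hL]
    rfl
  · have : ν s = 0 := by
      refine MeasureTheory.measure_mono_null ?_ hcompl
      intro L hLs hLeq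
      rw [Set.mem_singleton_iff] at hLeq
      exact hL (hLeq ▸ hLs)
    rw [this, Set.indicator_of_notMem hL]
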